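/- arXiv:1403.8083 — 2 statements merged into one kernel-verified Lean document; each statement's English description precedes it below -/
import Mathlib

section
/- For every x ∈ D and every d ∈ ℤ_{≥0}, 𝔉(x_1,…,x_d)·𝔉(Tx) − 𝔉(x_2,…,x_d)·𝔉(x) = (∏_{k=1}^d x_k x_{k+1}) · 𝔉(T^{d+1} x). -/
open scoped BigOperators

/-- Admissible index tuples: k₁ ≥ 1 and k_{i+1} ≥ k_i + 2. -/
def FAdm (m : ℕ) (k : Fin m → ℕ) : Prop :=
  (∀ i, 1 ≤ k i) ∧ ∀ i j : Fin m, (i : ℕ) + 1 = (j : ℕ) → k i + 2 ≤ k j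

/-- The function 𝔉 given by the alternating multiple series
`𝔉(x) = 1 + ∑_{m≥1} (-1)^m ∑_{k₁≥1, k_{i+1}≥k_i+2} x_{k₁}x_{k₁+1}⋯x_{k_m}x_{k_m+1}`;
the sequence is indexed so that `x k` is `x_k` for `k ≥ 1`. -/
noncomputable def Fcal (x : ℕ → ℂ) : ℂ :=
  ∑' p : (Σ m : ℕ, { k : Fin m → ℕ // FAdm m k }),
    (-1 : ℂ) ^ p.1 * ∏ i, x (p.2.1 i) * x (p.2.1 i + 1)

/-- 𝔉 of the finite sequence (x_1, …, x_n): x truncated after position n, padded by zeros. -/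
noncomputable def FcalFin (n : ℕ) (x : ℕ → ℂ) : ℂ :=
  Fcal fun k => if k ≤ n then x k else 0

/-- 𝔉 of the finite segment (x_a, …, x_b); it equals 1 when the segment is empty (b = a-1)
and, by convention, 0 when b = a-2 (a segment of "length -1"). -/
noncomputable def Fseg (x : ℕ → ℂ) (a b : ℕ) : ℂ :=
  if b + 1 < a then 0 else FcalFin (b + 1 - a) (fun j => x (j + a - 1))

lemma FAdm.step {m} {k : Fin m → ℕ} (h : FAdm m k) {i j : Fin m}
    (hij : (i : ℕ) + 1 = (j : ℕ)) : k i + 2 ≤ k j := h.2 i j hij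

lemma FAdm.strictMono {m} {k : Fin m → ℕ} (h : FAdm m k) : StrictMono k := by
  cases m with
  | zero => exact fun i => i.elim0
  | succ n =>
    refine Fin.strictMono_iff_lt_succ.2 fun i => ?_
    have := h.step (i := i.castSucc) (j := i.succ) (by simp)
    omega

lemma FAdm.three_le {m} {k : Fin m → ℕ} (h : FAdm m k) (i : Fin m) (hi : (i : ℕ) ≠ 0) :
    3 ≤ k i := by
  obtain ⟨t, ht⟩ := Nat.exists_eq_succ_of_ne_zero hi
  have hlt : t < m := by have := i.2; omega
  have h1 := h.step (i := ⟨t, hlt⟩) (j := i) (by simp [ht])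
  have h2 := h.1 ⟨t, hlt⟩
  omega


namespace Stmt5Aux

open Finset

abbrev Idx : Type := Σ m : ℕ, { k : Fin m → ℕ // FAdm m k }

noncomputable def term (x : ℕ → ℂ) (p : Idx) : ℂ :=
  (-1 : ℂ) ^ p.1 * ∏ i, x (p.2.1 i) * x (p.2.1 i + 1)

lemma Fcal_eq (x : ℕ → ℂ) : Fcal x = ∑' p : Idx, term x p := rfl

lemma Idx.ext' {m : ℕ} {k k' : Fin m → ℕ} {h : FAdm m k} {h' : FAdm m k'}
    (hkk : ∀ i, k i = k' i) : (⟨m, ⟨k, h⟩⟩ : Idx) = ⟨m, ⟨k', h'⟩⟩ := by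
  have : k = k' := funext hkk
  subst this
  rfl

/-- Summability of the terms of `Fcal`. -/
lemma summable_norm_term (x : ℕ → ℂ) (hx : Summable fun k : ℕ => ‖x (k + 1) * x (k + 2)‖) :
    Summable fun p : Idx => ‖term x p‖ := by
  classical
  have hsa : Summable (fun j : ℕ => ‖x j * x (j + 1)‖) :=
    (summable_nat_add_iff 1).1 hx
  -- summability over finsets
  have hF : Summable (fun s : Finset ℕ => ∏ j ∈ s, ‖x j * x (j + 1)‖) := by
    refine summable_of_sum_le (c := Real.exp (∑' j, ‖x j * x (j + 1)‖))
      (fun s => Finset.prod_nonneg fun j _ => norm_nonneg _) (fun u => ?_)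
    set N := (u.sup fun s => s.sup id) + 1 with hN
    have hsub : u ⊆ (Finset.range N).powerset := by
      intro s hs
      rw [Finset.mem_powerset]
      intro j hj
      rw [Finset.mem_range]
      have h1 : (id j : ℕ) ≤ s.sup id := Finset.le_sup hj
      have h2 : s.sup id ≤ u.sup fun s => s.sup id := Finset.le_sup (f := fun s => s.sup id) hs
      simp only [id] at h1
      omega
    calc ∑ s ∈ u, ∏ j ∈ s, ‖x j * x (j + 1)‖
        ≤ ∑ s ∈ (Finset.range N).powerset, ∏ j ∈ s, ‖x j * x (j + 1)‖ :=
          Finset.sum_le_sum_of_subset_of_nonneg hsub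
            (fun s _ _ => Finset.prod_nonneg fun j _ => norm_nonneg _)
      _ = ∏ j ∈ Finset.range N, (‖x j * x (j + 1)‖ + 1) := by
          rw [Finset.prod_add]; simp
      _ ≤ ∏ j ∈ Finset.range N, Real.exp ‖x j * x (j + 1)‖ :=
          Finset.prod_le_prod (fun j _ => by positivity)
            (fun j _ => Real.add_one_le_exp _)
      _ = Real.exp (∑ j ∈ Finset.range N, ‖x j * x (j + 1)‖) := (Real.exp_sum _ _).symm
      _ ≤ Real.exp (∑' j, ‖x j * x (j + 1)‖) :=
          Real.exp_le_exp.2 (Summable.sum_le_tsum _ (fun j _ => norm_nonneg _) hsa)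
  -- the injection into finsets
  have ginj : Function.Injective (fun p : Idx => Finset.image p.2.1 Finset.univ) := by
    rintro ⟨m, k, hk⟩ ⟨m', k', hk'⟩ hg
    simp only at hg
    have hkinj := hk.strictMono.injective
    have hk'inj := hk'.strictMono.injective
    have hcard : (Finset.image k Finset.univ).card = m := by
      rw [Finset.card_image_of_injective _ hkinj, Finset.card_univ, Fintype.card_fin]
    have hcard' : (Finset.image k' Finset.univ).card = m' := by
      rw [Finset.card_image_of_injective _ hk'inj, Finset.card_univ, Fintype.card_fin]
    have hm : m = m' := by rw [← hcard, ← hcard', hg]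
    subst hm
    have h1 : k = (Finset.image k Finset.univ).orderEmbOfFin hcard :=
      Finset.orderEmbOfFin_unique hcard
        (fun i => Finset.mem_image_of_mem _ (Finset.mem_univ i)) hk.strictMono
    have h2 : k' = (Finset.image k Finset.univ).orderEmbOfFin hcard := by
      refine Finset.orderEmbOfFin_unique hcard ?_ hk'.strictMono
      intro i
      rw [hg]
      exact Finset.mem_image_of_mem _ (Finset.mem_univ i)
    exact Idx.ext' fun i => by rw [h1, h2]
  have hkey : ∀ p : Idx, ‖term x p‖ = ∏ j ∈ Finset.image p.2.1 Finset.univ, ‖x j * x (j + 1)‖ := by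
    rintro ⟨m, k, hk⟩
    rw [Finset.prod_image (fun i _ j _ hij => hk.strictMono.injective hij)]
    simp [term, norm_prod]
  exact (Summable.congr (hF.comp_injective ginj) fun p => (hkey p).symm)

/-- The set of admissible tuples with all entries at least 2. -/
def ASet : Set Idx := {p : Idx | ∀ i, 2 ≤ p.2.1 i}

noncomputable def shiftUp (p : Idx) : Idx :=
  ⟨p.1, ⟨fun i => p.2.1 i + 1,
    ⟨fun i => Nat.le_add_left 1 _, fun i j hij => by have := p.2.2.2 i j hij; beta_reduce; omega⟩⟩⟩

noncomputable def e1fun (p : Idx) : ASet :=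
  ⟨shiftUp p, fun i => Nat.succ_le_succ (p.2.2.1 i)⟩

lemma e1_bij : Function.Bijective e1fun := by
  constructor
  · rintro ⟨m, k, hk⟩ ⟨m', k', hk'⟩ h
    have h' : shiftUp ⟨m, ⟨k, hk⟩⟩ = shiftUp ⟨m', ⟨k', hk'⟩⟩ := Subtype.ext_iff.1 h
    simp only [shiftUp] at h'
    obtain ⟨rfl, h2⟩ := Sigma.mk.inj_iff.1 h'
    have h3 := Subtype.mk_eq_mk.1 (eq_of_heq h2)
    exact Idx.ext' fun i => by have := congrFun h3 i; beta_reduce at this ⊢; omega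
  · rintro ⟨⟨m, k, hk⟩, hmem⟩
    have hmem' : ∀ i, 2 ≤ k i := hmem
    refine ⟨⟨m, ⟨fun i => k i - 1, ⟨fun i => ?_, fun i j hij => ?_⟩⟩⟩, ?_⟩
    · have := hmem' i; beta_reduce; omega
    · have := hk.2 i j hij; have := hmem' i; beta_reduce; omega
    · refine Subtype.ext ?_
      simp only [e1fun, shiftUp]
      exact Idx.ext' fun i => by have := hmem' i; beta_reduce; omega

lemma consUp_adm {m} {k : Fin m → ℕ} (hk : FAdm m k) :
    FAdm (m + 1) (Fin.cons 1 (fun i => k i + 2)) := by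
  constructor
  · intro i
    refine Fin.cases ?_ (fun i => ?_) i
    · simp
    · simp
  · intro i j hij
    rcases Fin.eq_zero_or_eq_succ j with rfl | ⟨j', rfl⟩
    · simp at hij
    · rcases Fin.eq_zero_or_eq_succ i with rfl | ⟨i', rfl⟩
      · simp only [Fin.cons_zero, Fin.cons_succ]
        have := hk.1 j'; omega
      · simp only [Fin.cons_succ]
        have hij' : (i' : ℕ) + 1 = (j' : ℕ) := by
          simp only [Fin.val_succ] at hij; omega
        have := hk.2 i' j' hij'
        omega

noncomputable def e2fun (p : Idx) : (ASetᶜ : Set Idx) :=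
  ⟨⟨p.1 + 1, ⟨Fin.cons 1 (fun i => p.2.1 i + 2), consUp_adm p.2.2⟩⟩,
    fun h => by have := h 0; simp at this⟩

lemma e2_bij : Function.Bijective e2fun := by
  constructor
  · rintro ⟨m, k, hk⟩ ⟨m', k', hk'⟩ h
    have h' : (⟨m + 1, ⟨Fin.cons 1 (fun i => k i + 2), consUp_adm hk⟩⟩ : Idx)
        = ⟨m' + 1, ⟨Fin.cons 1 (fun i => k' i + 2), consUp_adm hk'⟩⟩ := Subtype.ext_iff.1 h
    obtain ⟨hm, h2⟩ := Sigma.mk.inj_iff.1 h'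
    obtain rfl : m = m' := by omega
    have h3 := Subtype.mk_eq_mk.1 (eq_of_heq h2)
    refine Idx.ext' fun i => ?_
    have := congrFun h3 i.succ
    simp only [Fin.cons_succ] at this
    omega
  · rintro ⟨⟨m, k, hk⟩, hmem⟩
    have hmem' : ¬ ∀ i, 2 ≤ k i := hmem
    push_neg at hmem'
    cases m with
    | zero => obtain ⟨i, _⟩ := hmem'; exact i.elim0
    | succ m' =>
      obtain ⟨i, hi⟩ := hmem'
      have hk0 : k 0 = 1 := by
        by_cases h0 : (i : ℕ) = 0
        · have : i = 0 := Fin.ext h0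
          subst this
          have := hk.1 0; omega
        · have := hk.three_le i h0; omega
      have h3succ : ∀ i : Fin m', 3 ≤ k i.succ := by
        intro i
        exact hk.three_le i.succ (by simp [Fin.val_succ])
      refine ⟨⟨m', ⟨fun i => k i.succ - 2, ⟨fun i => ?_, fun i j hij => ?_⟩⟩⟩, ?_⟩
      · have := h3succ i; beta_reduce; omega
      · have hij' : (i.succ : ℕ) + 1 = (j.succ : ℕ) := by
          simp only [Fin.val_succ]; omega
        have := hk.2 i.succ j.succ hij'
        have := h3succ i
        beta_reduce; omega
      · refine Subtype.ext ?_
        simp only [e2fun]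
        refine Idx.ext' fun i => ?_
        refine Fin.cases ?_ (fun i' => ?_) i
        · simpa using hk0.symm
        · simp only [Fin.cons_succ]
          have := h3succ i'; omega

noncomputable def e1 : Idx ≃ ASet := Equiv.ofBijective e1fun e1_bij
noncomputable def e2 : Idx ≃ (ASetᶜ : Set Idx) := Equiv.ofBijective e2fun e2_bij

lemma term_e2 (x : ℕ → ℂ) (q : Idx) :
    term x (e2 q : Idx) = -(x 1 * x 2) * term (fun k => x (k + 2)) q := by
  obtain ⟨m, k, hk⟩ := q
  show term x ⟨m + 1, ⟨Fin.cons 1 (fun i => k i + 2), _⟩⟩ = _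
  simp only [term, Fin.prod_univ_succ, Fin.cons_zero, Fin.cons_succ, pow_succ]
  norm_num
  ring

/-- The fundamental recurrence for `Fcal`. -/
lemma Fcal_rec (x : ℕ → ℂ) (hx : Summable fun k : ℕ => ‖x (k + 1) * x (k + 2)‖) :
    Fcal x = Fcal (fun k => x (k + 1)) - x 1 * x 2 * Fcal (fun k => x (k + 2)) := by
  classical
  have hsum : Summable (term x) := (summable_norm_term x hx).of_norm
  have h1 : ∑' p : ASet, term x ↑p = Fcal (fun k => x (k + 1)) := by
    calc ∑' p : ASet, term x ↑p = ∑' q : Idx, term x ↑(e1 q) := (e1.tsum_eq _).symm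
      _ = ∑' q : Idx, term (fun k => x (k + 1)) q := tsum_congr fun q => rfl
      _ = Fcal (fun k => x (k + 1)) := (Fcal_eq _).symm
  have h2 : ∑' p : (ASetᶜ : Set Idx), term x ↑p = -(x 1 * x 2) * Fcal (fun k => x (k + 2)) := by
    calc ∑' p : (ASetᶜ : Set Idx), term x ↑p = ∑' q : Idx, term x ↑(e2 q) := (e2.tsum_eq _).symm
      _ = ∑' q : Idx, -(x 1 * x 2) * term (fun k => x (k + 2)) q := tsum_congr fun q => term_e2 x q
      _ = -(x 1 * x 2) * ∑' q : Idx, term (fun k => x (k + 2)) q := tsum_mul_left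
      _ = -(x 1 * x 2) * Fcal (fun k => x (k + 2)) := by rw [← Fcal_eq]
  have split := Summable.tsum_add_tsum_compl (s := ASet) (hsum.subtype _) (hsum.subtype _)
  rw [Fcal_eq x, ← split, h1, h2]
  ring

lemma FcalFin_eq (n : ℕ) (x : ℕ → ℂ) :
    FcalFin n x = Fcal (fun k => if k ≤ n then x k else 0) := rfl

noncomputable def p0 : Idx :=
  ⟨0, ⟨fun i => i.elim0, ⟨fun i => i.elim0, fun i _ _ => i.elim0⟩⟩⟩

lemma Fcal_eq_one (y : ℕ → ℂ) (hy : ∀ k, 2 ≤ k → y k = 0) : Fcal y = 1 := by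
  rw [Fcal_eq, tsum_eq_single p0 ?_]
  · simp [term, p0]
    exact Finset.prod_of_isEmpty _
  · rintro ⟨m, k, hk⟩ hne
    cases m with
    | zero => exact absurd (Idx.ext' fun i => i.elim0) hne
    | succ m' =>
      have hz : ∏ i : Fin (m' + 1), y (k i) * y (k i + 1) = 0 :=
        Finset.prod_eq_zero (Finset.mem_univ 0)
          (by rw [hy (k 0 + 1) (by have := hk.1 0; omega), mul_zero])
      show (-1 : ℂ) ^ (m' + 1) * _ = 0
      rw [hz, mul_zero]

lemma FcalFin_zero (x : ℕ → ℂ) : FcalFin 0 x = 1 :=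
  Fcal_eq_one _ (fun k hk => if_neg (by omega))

lemma FcalFin_one (x : ℕ → ℂ) : FcalFin 1 x = 1 :=
  Fcal_eq_one _ (fun k hk => if_neg (by omega))

lemma trunc_summable (x : ℕ → ℂ) (hx : Summable fun k : ℕ => ‖x (k + 1) * x (k + 2)‖)
    (n : ℕ) :
    Summable fun k : ℕ =>
      ‖(if k + 1 ≤ n then x (k + 1) else 0) * (if k + 2 ≤ n then x (k + 2) else 0)‖ := by
  refine Summable.of_nonneg_of_le (fun k => norm_nonneg _) (fun k => ?_) hx
  rw [norm_mul, norm_mul]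
  refine mul_le_mul ?_ ?_ (norm_nonneg _) (norm_nonneg _)
  · split_ifs <;> simp
  · split_ifs <;> simp

lemma FcalFin_step (x : ℕ → ℂ) (hx : Summable fun k : ℕ => ‖x (k + 1) * x (k + 2)‖)
    (n : ℕ) :
    FcalFin (n + 2) x = FcalFin (n + 1) (fun k => x (k + 1))
      - x 1 * x 2 * FcalFin n (fun k => x (k + 2)) := by
  have h := Fcal_rec (fun k => if k ≤ n + 2 then x k else 0) (trunc_summable x hx (n + 2))
  beta_reduce at h
  rw [if_pos (by omega : (1 : ℕ) ≤ n + 2), if_pos (by omega : (2 : ℕ) ≤ n + 2)] at h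
  rw [show (fun k => if k + 1 ≤ n + 2 then x (k + 1) else 0)
      = (fun k => if k ≤ n + 1 then x (k + 1) else 0) from
      funext fun k => if_congr (by omega) rfl rfl,
    show (fun k => if k + 2 ≤ n + 2 then x (k + 2) else 0)
      = (fun k => if k ≤ n then x (k + 2) else 0) from
      funext fun k => if_congr (by omega) rfl rfl] at h
  exact h

lemma Fseg_one (x : ℕ → ℂ) (d : ℕ) : Fseg x 1 d = FcalFin d x := by
  unfold Fseg
  rw [if_neg (by omega)]
  rfl

lemma Fseg_two_succ (y : ℕ → ℂ) (n : ℕ) :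
    Fseg y 2 (n + 1) = FcalFin n (fun j => y (j + 1)) := by
  unfold Fseg
  rw [if_neg (by omega)]
  rfl

lemma prod_shift (x : ℕ → ℂ) (n : ℕ) :
    x 1 * x 2 * ∏ k ∈ Finset.Icc 1 n, x (k + 1) * x (k + 2)
      = ∏ k ∈ Finset.Icc 1 (n + 1), x k * x (k + 1) := by
  induction n with
  | zero => simp
  | succ n ih =>
    rw [Finset.prod_Icc_succ_top (by omega : 1 ≤ n + 1) (fun k => x (k + 1) * x (k + 2)),
      Finset.prod_Icc_succ_top (by omega : 1 ≤ n + 1 + 1) (fun k => x k * x (k + 1)), ← ih,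
      show n + 1 + 1 = n + 2 from rfl, show n + 1 + 2 = n + 3 from rfl,
      show n + 2 + 1 = n + 3 from rfl]
    ring

lemma key (d : ℕ) : ∀ x : ℕ → ℂ, (Summable fun k : ℕ => ‖x (k + 1) * x (k + 2)‖) →
    FcalFin d x * Fcal (fun k => x (k + 1)) - Fseg x 2 d * Fcal x
      = (∏ k ∈ Finset.Icc 1 d, x k * x (k + 1)) * Fcal (fun k => x (k + d + 1)) := by
  induction d with
  | zero =>
    intro x hx
    rw [FcalFin_zero, show Fseg x 2 0 = 0 from if_pos (by omega),
      show Finset.Icc 1 0 = ∅ from Finset.Icc_eq_empty (by omega), Finset.prod_empty,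
      show (fun k : ℕ => x (k + 0 + 1)) = (fun k => x (k + 1)) from rfl]
    ring
  | succ d ih =>
    intro x hx
    have hxT : Summable fun k : ℕ => ‖x (k + 1 + 1) * x (k + 1 + 2)‖ :=
      (summable_nat_add_iff (f := fun k : ℕ => ‖x (k + 1) * x (k + 2)‖) 1).2 hx
    have hxT' : Summable fun k : ℕ => ‖x (k + 2) * x (k + 3)‖ := by
      refine hxT.congr fun k => ?_
      congr 2 <;> omega
    cases d with
    | zero =>
      rw [show (0 : ℕ) + 1 = 1 from rfl, FcalFin_one,
        show Fseg x 2 1 = 1 from by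
          rw [show (1 : ℕ) = 0 + 1 from rfl, Fseg_two_succ]; exact FcalFin_zero _,
        Fcal_rec x hx, Finset.Icc_self, Finset.prod_singleton,
        show (fun k : ℕ => x (k + 1 + 1)) = (fun k => x (k + 2)) from rfl,
        show (1 : ℕ) + 1 = 2 from rfl]
      ring
    | succ e =>
      have ihT := ih (fun j => x (j + 1)) hxT
      -- normalize arithmetic in ihT
      rw [show Fseg (fun j => x (j + 1)) 2 (e + 1)
          = FcalFin e (fun j => x (j + 1 + 1)) from Fseg_two_succ _ e] at ihT
      rw [show (fun k : ℕ => x (k + 1 + 1)) = (fun k => x (k + 2)) from rfl,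
        show (fun k : ℕ => x (k + 1) * x (k + 1 + 1)) = (fun k => x (k + 1) * x (k + 2)) from rfl,
        show (fun k : ℕ => x (k + (e + 1) + 1 + 1)) = (fun k => x (k + e + 3)) from
          funext fun k => congrArg x (by omega)] at ihT
      -- now ihT : A * F2 - B * F1 = P * F3
      have hstep : FcalFin (e + 1 + 1) x = FcalFin (e + 1) (fun k => x (k + 1))
          - x 1 * x 2 * FcalFin e (fun k => x (k + 2)) := FcalFin_step x hx e
      have hseg : Fseg x 2 (e + 1 + 1) = FcalFin (e + 1) (fun j => x (j + 1)) :=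
        Fseg_two_succ x (e + 1)
      have hrec : Fcal x = Fcal (fun k => x (k + 1)) - x 1 * x 2 * Fcal (fun k => x (k + 2)) :=
        Fcal_rec x hx
      have hprod : x 1 * x 2 * ∏ k ∈ Finset.Icc 1 (e + 1), x (k + 1) * x (k + 2)
          = ∏ k ∈ Finset.Icc 1 (e + 1 + 1), x k * x (k + 1) := prod_shift x (e + 1)
      rw [hstep, hseg, hrec]
      rw [show (fun k : ℕ => x (k + (e + 1 + 1) + 1)) = (fun k => x (k + e + 3)) from
        funext fun k => congrArg x (by omega)]
      rw [← hprod]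
      linear_combination (x 1 * x 2) * ihT

end Stmt5Aux

/-- For every x ∈ D and d ≥ 0:
𝔉(x₁,…,x_d) 𝔉(Tx) - 𝔉(x₂,…,x_d) 𝔉(x) = (∏_{k=1}^d x_k x_{k+1}) 𝔉(T^{d+1}x). -/
theorem stmt_5 (x : ℕ → ℂ) (hx : Summable fun k : ℕ => ‖x (k + 1) * x (k + 2)‖)
    (d : ℕ) :
    Fseg x 1 d * Fcal (fun k => x (k + 1)) - Fseg x 2 d * Fcal x
      = (∏ k ∈ Finset.Icc 1 d, x k * x (k + 1)) * Fcal (fun k => x (k + d + 1)) := by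
  rw [Stmt5Aux.Fseg_one]
  exact Stmt5Aux.key d x hx
end

section
/- The sequence of polynomials P_n defined by P_0(x)=1, P_1(x)=(x−λ_0)/w_0 and the recurrence x P_n(x) = w_{n−1}P_{n−1}(x) + λ_n P_n(x) + w_n P_{n+1}(x) satisfies, for all n ≥ 0 and all x with x ≠ λ_k for k < n, P_n(x) = (∏_{k=0}^{n−1} (x−λ_k)/w_k) · 𝔉({γ_k²/(λ_k−x)}_{k=0}^{n−1}), where γ_0 = 1 and γ_{k+1} = w_k/γ_k. -/
open scoped BigOperators

abbrev TT := Σ m : ℕ, { k : Fin m → ℕ // FAdm m k }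

noncomputable def fterm (x : ℕ → ℂ) (p : TT) : ℂ :=
  (-1 : ℂ) ^ p.1 * ∏ i, x (p.2.1 i) * x (p.2.1 i + 1)

def trunc (n : ℕ) (x : ℕ → ℂ) : ℕ → ℂ := fun k => if k ≤ n then x k else 0

lemma FcalFin_eq (n : ℕ) (x : ℕ → ℂ) : FcalFin n x = ∑' p : TT, fterm (trunc n x) p := rfl

lemma FAdm.mono' {m : ℕ} {k : Fin m → ℕ} (h : FAdm m k) :
    ∀ (i j : ℕ) (hi : i < m) (hj : j < m), i < j → k ⟨i, hi⟩ + 2 ≤ k ⟨j, hj⟩ := by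
  intro i j hi hj hij
  induction j with
  | zero => omega
  | succ j ihj =>
    rcases Nat.lt_succ_iff_lt_or_eq.mp hij with h' | h'
    · have hj' : j < m := by omega
      have h2 := h.2 ⟨j, hj'⟩ ⟨j+1, hj⟩ (by simp)
      have h3 := ihj hj' h'
      omega
    · subst h'
      exact h.2 ⟨i, hi⟩ ⟨i+1, hj⟩ (by simp)

lemma FAdm.lb {m : ℕ} {k : Fin m → ℕ} (h : FAdm m k) (i : Fin m) :
    2 * (i : ℕ) + 1 ≤ k i := by
  obtain ⟨i, hi⟩ := i
  simp only [Fin.val_mk]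
  induction i with
  | zero => exact h.1 _
  | succ i ih =>
    have hi' : i < m := by omega
    have h2 := h.2 ⟨i, hi'⟩ ⟨i+1, hi⟩ (by simp)
    have h3 := ih hi'
    omega

lemma fterm_trunc_eq_zero {n : ℕ} {x : ℕ → ℂ} {p : TT} (i : Fin p.1)
    (hi : n < p.2.1 i + 1) : fterm (trunc n x) p = 0 := by
  unfold fterm
  rw [Finset.prod_eq_zero (Finset.mem_univ i), mul_zero]
  simp [trunc, Nat.not_le.mpr hi]

lemma support_subset (n : ℕ) (x : ℕ → ℂ) :
    Function.support (fterm (trunc n x)) ⊆ {p : TT | ∀ i, p.2.1 i + 1 ≤ n} := by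
  intro p hp i
  by_contra h
  exact hp (fterm_trunc_eq_zero i (by omega))

lemma setS_finite (n : ℕ) : {p : TT | ∀ i, p.2.1 i ≤ n}.Finite := by
  have : Finite {p : TT | ∀ i, p.2.1 i ≤ n} := by
    apply Finite.of_injective
      (fun q : {p : TT | ∀ i, p.2.1 i ≤ n} =>
        (fun i : Fin (n + 2) => if h : (i : ℕ) < q.1.1 then
          (⟨q.1.2.1 ⟨i, h⟩, by have := q.2 ⟨(i : ℕ), h⟩; omega⟩ : Fin (n + 2))
        else ⟨n + 1, by omega⟩))
    rintro ⟨⟨m, k, hk⟩, hq⟩ ⟨⟨m', k', hk'⟩, hq'⟩ hEq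
    simp only [Set.mem_setOf_eq] at hq hq'
    have hm : m ≤ n + 1 := by
      by_contra h
      have hlt : n + 1 < m := by omega
      have h1 := hk.lb ⟨n + 1, hlt⟩
      have h2 := hq ⟨n + 1, hlt⟩
      simp only [Fin.val_mk] at h1
      omega
    have hm' : m' ≤ n + 1 := by
      by_contra h
      have hlt : n + 1 < m' := by omega
      have h1 := hk'.lb ⟨n + 1, hlt⟩
      have h2 := hq' ⟨n + 1, hlt⟩
      simp only [Fin.val_mk] at h1
      omega
    have hmm : m = m' := by
      by_contra hne
      rcases Nat.lt_or_ge m m' with h | h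
      · have := congrFun hEq ⟨m, by omega⟩
        simp only [Fin.val_mk, dif_neg (lt_irrefl m), dif_pos h, Fin.mk.injEq] at this
        have h2 := hq' ⟨m, h⟩
        omega
      · have hlt : m' < m := by omega
        have := congrFun hEq ⟨m', by omega⟩
        simp only [Fin.val_mk, dif_pos hlt, dif_neg (lt_irrefl m'), Fin.mk.injEq] at this
        have h2 := hq ⟨m', hlt⟩
        omega
    subst hmm
    have hkk : k = k' := by
      funext i
      have := congrFun hEq ⟨(i : ℕ), by omega⟩
      simp only [Fin.val_mk, dif_pos i.2, Fin.mk.injEq] at this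
      simpa using this
    subst hkk
    rfl
  exact Set.toFinite _

lemma supp_finite (n : ℕ) (x : ℕ → ℂ) :
    (Function.support (fterm (trunc n x))).Finite := by
  refine (setS_finite n).subset ?_
  intro p hp i
  have := support_subset n x hp i
  omega

lemma summable_fterm (n : ℕ) (x : ℕ → ℂ) : Summable (fterm (trunc n x)) :=
  summable_of_finite_support (supp_finite n x)

lemma trunc_eq_of_le {a b j : ℕ} (x : ℕ → ℂ) (hj : j ≤ a) (hj' : j ≤ b) :
    trunc a x j = trunc b x j := by simp [trunc, hj, hj']

def pEmpty : TT := ⟨0, ⟨fun i => i.elim0, fun i => i.elim0, fun i _ _ => i.elim0⟩⟩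

lemma FcalFin_of_le_one {n : ℕ} (hn : n ≤ 1) (x : ℕ → ℂ) : FcalFin n x = 1 := by
  rw [FcalFin_eq, tsum_eq_single pEmpty ?_]
  · simp [fterm, pEmpty]
    exact Finset.prod_of_isEmpty _
  · rintro ⟨m, k, hk⟩ hne
    cases m with
    | zero =>
      exfalso
      apply hne
      have hk0 : (⟨k, hk⟩ : {k : Fin 0 → ℕ // FAdm 0 k}) = pEmpty.2 :=
        Subtype.ext (funext fun i => i.elim0)
      show (⟨0, ⟨k, hk⟩⟩ : TT) = ⟨0, pEmpty.2⟩
      rw [hk0]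
    | succ m =>
      have h0 : (0 : ℕ) < m + 1 := Nat.succ_pos m
      have h1 := hk.1 ⟨0, h0⟩
      exact fterm_trunc_eq_zero (p := ⟨m+1, k, hk⟩) ⟨0, h0⟩
        (show n < k ⟨0, h0⟩ + 1 by omega)

def extTup (n : ℕ) (q : TT) (hq : ∀ i, q.2.1 i + 1 ≤ n) : TT :=
  ⟨q.1 + 1, ⟨fun i => if h : (i : ℕ) < q.1 then q.2.1 ⟨i, h⟩ else n + 1, by
    constructor
    · intro i
      beta_reduce
      by_cases h : (i : ℕ) < q.1
      · rw [dif_pos h]; exact q.2.2.1 _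
      · rw [dif_neg h]; omega
    · intro i j hij
      beta_reduce
      by_cases hj : (j : ℕ) < q.1
      · have hi : (i : ℕ) < q.1 := by omega
        rw [dif_pos hi, dif_pos hj]
        exact q.2.2.2 ⟨i, hi⟩ ⟨j, hj⟩ (by simpa)
      · have hjv : (j : ℕ) = q.1 := by have := j.2; omega
        have hi : (i : ℕ) < q.1 := by omega
        rw [dif_pos hi, dif_neg hj]
        have := hq ⟨i, hi⟩
        omega⟩⟩

lemma fterm_ext (n : ℕ) (x : ℕ → ℂ) (q : TT) (hq : ∀ i, q.2.1 i + 1 ≤ n) :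
    fterm (trunc (n+2) x) (extTup n q hq) = -(x (n+1) * x (n+2)) * fterm (trunc n x) q := by
  obtain ⟨m, k, hk⟩ := q
  have hq' : ∀ i : Fin m, k i + 1 ≤ n := hq
  change (-1 : ℂ) ^ (m+1) * ∏ i : Fin (m+1), trunc (n+2) x (if h : (i : ℕ) < m then k ⟨i, h⟩ else n + 1) *
      trunc (n+2) x ((if h : (i : ℕ) < m then k ⟨i, h⟩ else n + 1) + 1) = _
  simp only [fterm, extTup, Fin.prod_univ_castSucc, Fin.coe_castSucc, Fin.val_last]
  rw [dif_neg (lt_irrefl m)]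
  have hprod : ∀ i : Fin m,
      trunc (n+2) x (if h : (i : ℕ) < m then k ⟨i, h⟩ else n + 1) *
        trunc (n+2) x ((if h : (i : ℕ) < m then k ⟨i, h⟩ else n + 1) + 1)
      = trunc n x (k i) * trunc n x (k i + 1) := by
    intro i
    rw [dif_pos i.2]
    have h1 := hq' i
    have hki : k ⟨(i : ℕ), i.2⟩ = k i := rfl
    rw [hki,
      show trunc (n+2) x (k i) = trunc n x (k i) from trunc_eq_of_le x (by omega) (by omega),
      show trunc (n+2) x (k i + 1) = trunc n x (k i + 1) from
        trunc_eq_of_le x (by omega) (by omega)]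
  rw [Finset.prod_congr rfl (fun i _ => hprod i)]
  have ht1 : trunc (n+2) x (n+1) = x (n+1) := by simp [trunc]
  have ht2 : trunc (n+2) x (n+1+1) = x (n+2) := by simp [trunc]
  rw [ht1, ht2]
  ring

lemma extTup_irrel (n : ℕ) (q : TT) (h1 h2 : ∀ i, q.2.1 i + 1 ≤ n) :
    extTup n q h1 = extTup n q h2 :=
  congrArg (Sigma.mk (q.1 + 1)) (Subtype.ext rfl)

lemma extTup_last (n : ℕ) (q : TT) (hq : ∀ i, q.2.1 i + 1 ≤ n) :
    (extTup n q hq).2.1 ⟨q.1, Nat.lt_succ_self _⟩ = n + 1 := by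
  simp [extTup]

lemma extTup_inj {n : ℕ} {q q' : TT} {hq : ∀ i, q.2.1 i + 1 ≤ n}
    {hq' : ∀ i, q'.2.1 i + 1 ≤ n} (h : extTup n q hq = extTup n q' hq') : q = q' := by
  obtain ⟨m, k, hk⟩ := q
  obtain ⟨m', k', hk'⟩ := q'
  have h1 : m + 1 = m' + 1 := congrArg Sigma.fst h
  have hmm : m = m' := by omega
  subst hmm
  have h2 := (Sigma.mk.inj_iff.mp h).2
  rw [heq_eq_eq, Subtype.ext_iff] at h2
  have hkk : k = k' := by
    funext i
    have h3 := congrFun h2 ⟨(i : ℕ), Nat.lt_succ_of_lt i.2⟩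
    simp only [Fin.val_mk] at h3
    rw [dif_pos i.2, dif_pos i.2] at h3
    exact h3
  subst hkk
  exact congrArg (Sigma.mk m) (Subtype.ext rfl)

lemma FcalFin_rec (n : ℕ) (x : ℕ → ℂ) :
    FcalFin (n+2) x = FcalFin (n+1) x - x (n+1) * x (n+2) * FcalFin n x := by
  classical
  set g1 : TT → ℂ := fun p => if (∀ i, p.2.1 i ≤ n) then fterm (trunc (n+2) x) p else 0 with hg1def
  set g2 : TT → ℂ := fun p => if (∀ i, p.2.1 i ≤ n) then 0 else fterm (trunc (n+2) x) p
    with hg2def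
  have hg1 : g1 = fterm (trunc (n+1) x) := by
    funext p
    rw [hg1def]
    by_cases h : ∀ i, p.2.1 i ≤ n
    · beta_reduce
      rw [if_pos h]
      obtain ⟨m, k, hk⟩ := p
      have h' : ∀ i : Fin m, k i ≤ n := h
      unfold fterm
      congr 1
      refine Finset.prod_congr rfl fun i _ => ?_
      have hi := h' i
      rw [show trunc (n+2) x (k i) = trunc (n+1) x (k i) from
            trunc_eq_of_le x (by omega) (by omega),
          show trunc (n+2) x (k i + 1) = trunc (n+1) x (k i + 1) from
            trunc_eq_of_le x (by omega) (by omega)]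
    · beta_reduce
      rw [if_neg h]
      push_neg at h
      obtain ⟨i, hi⟩ := h
      exact (fterm_trunc_eq_zero i (by omega)).symm
  have hsum1 : Summable g1 := hg1 ▸ summable_fterm (n+1) x
  have hsupp2 : Function.support g2 ⊆ Function.support (fterm (trunc (n+2) x)) := by
    intro p hp
    rw [Function.mem_support] at hp ⊢
    intro h0
    apply hp
    rw [hg2def]
    beta_reduce
    split <;> simp [h0]
  have hsum2 : Summable g2 :=
    summable_of_finite_support ((supp_finite (n+2) x).subset hsupp2)
  -- the support of the shifted function
  have hs : ∀ q : TT, q ∈ Function.support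
      (fun p => -(x (n+1) * x (n+2)) * fterm (trunc n x) p) → ∀ i, q.2.1 i + 1 ≤ n := by
    intro q hq
    apply support_subset n x
    rw [Function.mem_support]
    intro h0
    apply hq
    simp [h0]
  have key : ∑' p, g2 p = ∑' p, (-(x (n+1) * x (n+2)) * fterm (trunc n x) p) := by
    apply tsum_eq_tsum_of_ne_zero_bij (fun q => extTup n q.1 (hs q.1 q.2))
    · rintro q q' hEq
      exact Subtype.ext (extTup_inj hEq)
    · rintro p hp
      obtain ⟨M, K, hK⟩ := p
      have hp' : (if (∀ i : Fin M, K i ≤ n) then 0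
          else fterm (trunc (n+2) x) ⟨M, ⟨K, hK⟩⟩) ≠ 0 := hp
      have hpA : ¬ (∀ i : Fin M, K i ≤ n) := by
        intro h; exact hp' (if_pos h)
      have hpf : fterm (trunc (n+2) x) ⟨M, ⟨K, hK⟩⟩ ≠ 0 := by
        rwa [if_neg hpA] at hp'
      have h2 : ∀ i : Fin M, K i + 1 ≤ n + 2 := support_subset (n+2) x hpf
      push_neg at hpA
      obtain ⟨i0, hi0⟩ := hpA
      have hi0' : K i0 = n + 1 := by
        have := h2 i0
        omega
      have hlast : (i0 : ℕ) + 1 = M := by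
        by_contra hcon
        have hlt : (i0 : ℕ) + 1 < M := by have := i0.2; omega
        have hmono := hK.mono' (i0 : ℕ) ((i0 : ℕ) + 1) i0.2 hlt (by omega)
        have h3 := h2 ⟨(i0 : ℕ) + 1, hlt⟩
        simp only [Fin.eta] at hmono
        omega
      cases M with
      | zero => exact absurd i0.2 (by omega)
      | succ m =>
        have hi0m : (i0 : ℕ) = m := by
          have := i0.2; omega
        have hadm : FAdm m (fun i : Fin m => K ⟨(i : ℕ), by omega⟩) :=
          ⟨fun i => hK.1 _, fun i j hij => hK.2 ⟨(i : ℕ), by omega⟩ ⟨(j : ℕ), by omega⟩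
            (by simpa using hij)⟩
        have hKm : K ⟨m, Nat.lt_succ_self m⟩ = n + 1 := by
          rw [show (⟨m, Nat.lt_succ_self m⟩ : Fin (m+1)) = i0 from
            Fin.ext (by simp only [Fin.val_mk]; omega)]
          exact hi0'
        have hqsmall : ∀ i : Fin m, K ⟨(i : ℕ), by omega⟩ + 1 ≤ n := by
          intro i
          have hmono := hK.mono' (i : ℕ) m (by omega) (Nat.lt_succ_self m) i.2
          omega
        set q : TT := ⟨m, ⟨fun i : Fin m => K ⟨(i : ℕ), by omega⟩, hadm⟩⟩ with hqdef
        have hqsmall' : ∀ i, q.2.1 i + 1 ≤ n := hqsmall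
        have hext : extTup n q hqsmall' = ⟨m + 1, ⟨K, hK⟩⟩ := by
          apply congrArg (Sigma.mk (m + 1))
          apply Subtype.ext
          funext j
          simp only [extTup, hqdef]
          by_cases hj : (j : ℕ) < m
          · rw [dif_pos hj]
          · rw [dif_neg hj]
            have hj2 : (j : ℕ) < m + 1 := j.2
            have hje : j = i0 := Fin.ext (by omega)
            rw [hje, hi0']
        have hmem : q ∈ Function.support
            (fun p => -(x (n+1) * x (n+2)) * fterm (trunc n x) p) := by
          rw [Function.mem_support]
          rw [← fterm_ext n x q hqsmall', hext]
          exact hpf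
        refine ⟨⟨q, hmem⟩, ?_⟩
        exact (extTup_irrel n q (hs q hmem) hqsmall').trans hext
    · rintro ⟨q, hq⟩
      have hnotA : ¬ (∀ i, (extTup n q (hs q hq)).2.1 i ≤ n) := by
        intro hall
        have := hall ⟨q.1, Nat.lt_succ_self _⟩
        rw [extTup_last] at this
        omega
      rw [hg2def]
      beta_reduce
      rw [if_neg hnotA]
      exact fterm_ext n x q (hs q hq)
  have hptwise : ∀ p : TT, fterm (trunc (n+2) x) p = g1 p + g2 p := by
    intro p
    rw [hg1def, hg2def]
    by_cases h : ∀ i, p.2.1 i ≤ n <;> simp [h]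
  calc FcalFin (n+2) x = ∑' p, (g1 p + g2 p) := by
        rw [FcalFin_eq]; exact tsum_congr hptwise
    _ = (∑' p, g1 p) + ∑' p, g2 p := Summable.tsum_add hsum1 hsum2
    _ = FcalFin (n+1) x + -(x (n+1) * x (n+2)) * FcalFin n x := by
        rw [key, tsum_mul_left, hg1, ← FcalFin_eq, ← FcalFin_eq]
    _ = FcalFin (n+1) x - x (n+1) * x (n+2) * FcalFin n x := by ring

/-- Orthonormal polynomials from the three-term recurrence expressed through 𝔉:
P_n(x) = (∏_{k<n} (x-λ_k)/w_k) · 𝔉({γ_k²/(λ_k-x)}_{k=0}^{n-1}),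
where γ₀ = 1, γ_{k+1} = w_k/γ_k. -/
theorem stmt_6 (lam : ℕ → ℝ) (w : ℕ → ℝ) (hw : ∀ n, 0 < w n)
    (gam : ℕ → ℝ) (hg0 : gam 0 = 1) (hgrec : ∀ k, gam (k + 1) = w k / gam k)
    (P : ℕ → ℝ → ℝ)
    (hP0 : ∀ x, P 0 x = 1) (hP1 : ∀ x, P 1 x = (x - lam 0) / w 0)
    (hPrec : ∀ (n : ℕ), 1 ≤ n → ∀ x : ℝ,
      x * P n x = w (n - 1) * P (n - 1) x + lam n * P n x + w n * P (n + 1) x) :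
    ∀ (n : ℕ) (x : ℝ), (∀ k < n, x ≠ lam k) →
      (P n x : ℂ) = (∏ k ∈ Finset.range n, ((x : ℂ) - lam k) / w k) *
        FcalFin n (fun j => ((gam (j - 1) : ℂ))^2 / ((lam (j - 1) : ℂ) - x)) := by
  have hgam : ∀ k, gam k ≠ 0 := by
    intro k
    induction k with
    | zero => rw [hg0]; norm_num
    | succ k ihk => rw [hgrec]; exact div_ne_zero (ne_of_gt (hw k)) ihk
  have hwne : ∀ k, (w k : ℂ) ≠ 0 := fun k => Complex.ofReal_ne_zero.mpr (ne_of_gt (hw k))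
  intro n
  induction n using Nat.strong_induction_on with
  | _ n ih =>
    match n with
    | 0 =>
      intro x _
      rw [hP0, FcalFin_of_le_one (by norm_num)]
      simp
    | 1 =>
      intro x _
      rw [hP1, FcalFin_of_le_one (le_refl 1), Finset.prod_range_one]
      push_cast
      ring
    | (m+2) =>
      intro x hx
      have ihm := ih m (by omega) x (fun k hk => hx k (by omega))
      have ihm1 := ih (m+1) (by omega) x (fun k hk => hx k (by omega))
      set y : ℕ → ℂ := fun j => ((gam (j - 1) : ℂ))^2 / ((lam (j - 1) : ℂ) - x) with hy
      have hgw : (gam m : ℂ)^2 * ((gam (m+1) : ℂ))^2 = (w m : ℂ)^2 := by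
        have h1 : gam m * gam (m+1) = w m := by
          rw [hgrec, mul_comm, div_mul_cancel₀ _ (hgam m)]
      -- cast
        have h2 : (gam m : ℂ) * (gam (m+1) : ℂ) = (w m : ℂ) := by exact_mod_cast h1
        calc (gam m : ℂ)^2 * ((gam (m+1) : ℂ))^2 = ((gam m : ℂ) * (gam (m+1) : ℂ))^2 := by ring
          _ = (w m : ℂ)^2 := by rw [h2]
      have hrec := hPrec (m+1) (by omega) x
      norm_num at hrec
      have hP2 : w (m+1) * P (m+2) x = (x - lam (m+1)) * P (m+1) x - w m * P m x := by
        linarith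
      have hP2c : (w (m+1) : ℂ) * (P (m+2) x : ℂ)
          = ((x : ℂ) - lam (m+1)) * (P (m+1) x : ℂ) - (w m : ℂ) * (P m x : ℂ) := by
        exact_mod_cast congrArg (fun t : ℝ => (t : ℂ)) hP2
      have hlm : ((lam m : ℂ) - x) ≠ 0 := by
        rw [sub_ne_zero]
        exact_mod_cast (hx m (by omega)).symm
      have hlm1 : ((lam (m+1) : ℂ) - x) ≠ 0 := by
        rw [sub_ne_zero]
        exact_mod_cast (hx (m+1) (by omega)).symm
      have hF := FcalFin_rec m y
      have hy1 : y (m+1) = (gam m : ℂ)^2 / ((lam m : ℂ) - x) := by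
        simp only [hy]
        norm_num
      have hy2 : y (m+2) = (gam (m+1) : ℂ)^2 / ((lam (m+1) : ℂ) - x) := by
        simp only [hy]
        norm_num
      have hyy : (gam m : ℂ)^2 / ((lam m : ℂ) - x) * ((gam (m+1) : ℂ)^2 / ((lam (m+1) : ℂ) - x))
          = (w m : ℂ)^2 / (((lam m : ℂ) - x) * ((lam (m+1) : ℂ) - x)) := by
        rw [div_mul_div_comm, hgw]
      rw [hy1, hy2, hyy] at hF
      have hPP : (P (m+2) x : ℂ)
          = (((x : ℂ) - lam (m+1)) * (P (m+1) x : ℂ) - (w m : ℂ) * (P m x : ℂ)) / w (m+1) := by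
        rw [eq_div_iff (hwne (m+1))]
        linear_combination hP2c
      rw [Finset.prod_range_succ] at ihm1
      rw [hPP, ihm1, ihm, hF, Finset.prod_range_succ, Finset.prod_range_succ]
      generalize (∏ k ∈ Finset.range m, ((x : ℂ) - lam k) / w k) = PP
      generalize FcalFin (m+1) y = A
      generalize FcalFin m y = B
      field_simp [hwne m, hwne (m+1), hlm, hlm1]
      ring
end
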